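/- Let n ≥ 2, μ > 0, ν₀ ≥ 0, S₀ ∈ ℝ. Then sup over t ≥ 0 of the function f(t) = S₀ + (4ν₀ t − (n−1)μ² S₀ t²)/(1 + n(n−1)μ² t²) equals (1/(2n))·((2n−1) S₀ + √(S₀² + (n/(n−1))·(4ν₀/μ)²)). -/

import Mathlib

lemma weyl_ub (N a c S D t : ℝ) (hN : 2 ≤ N) (ha : 0 < a) (hc : 0 ≤ c) (ht : 0 ≤ t)
    (hD : 0 ≤ D) (hD2 : D ^ 2 * a = S ^ 2 * a + N * c ^ 2) :
    S + (c * t - a * S * t ^ 2) / (1 + N * a * t ^ 2) ≤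
      (1 / (2 * N)) * ((2 * N - 1) * S + D) := by
  have hNa : 0 < N * a := mul_pos (by linarith) ha
  have hq : 0 < 1 + N * a * t ^ 2 := by nlinarith [mul_nonneg hNa.le (sq_nonneg t)]
  have hNc : 0 ≤ N * c ^ 2 := mul_nonneg (by linarith) (sq_nonneg c)
  have hSD : S ≤ D := by
    by_contra h
    push_neg at h
    have h1 : 0 < a * ((S - D) * (S + D)) :=
      mul_pos ha (mul_pos (by linarith) (by linarith))
    nlinarith
  have hSD' : -D ≤ S := by
    by_contra h
    push_neg at h
    have h1 : 0 < a * ((S - D) * (S + D)) :=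
      mul_pos ha (mul_pos_of_neg_of_neg (by linarith) (by linarith))
    nlinarith
  have h1 : (c * t - a * S * t ^ 2) / (1 + N * a * t ^ 2) ≤ (D - S) / (2 * N) := by
    rw [div_le_div_iff₀ hq (by linarith)]
    rcases eq_or_lt_of_le (by linarith : (0:ℝ) ≤ D + S) with hDS | hDS
    · have hS2 : S ^ 2 = D ^ 2 := by nlinarith [sq_nonneg (S + D)]
      have hc2 : c ^ 2 = 0 := by nlinarith
      have hc0 : c = 0 := by nlinarith [sq_nonneg c]
      subst hc0
      nlinarith [mul_nonneg (mul_nonneg hNa.le hD) (sq_nonneg t)]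
    · have hP : 0 < N * a * (D + S) := mul_pos hNa hDS
      have hqq : (N * a * (D + S)) *
          ((D - S) * (1 + N * a * t ^ 2) - (c * t - a * S * t ^ 2) * (2 * N)) =
          (N * a * (D + S) * t - N * c) ^ 2 := by linear_combination N * hD2
      nlinarith [hqq, sq_nonneg (N * a * (D + S) * t - N * c), hP]
  have h2 : (1 / (2 * N)) * ((2 * N - 1) * S + D) = S + (D - S) / (2 * N) := by
    field_simp; ring
  linarith

lemma weyl_att (N a c S D u : ℝ) (hN : 2 ≤ N) (ha : 0 < a)
    (huc : c = a * (D + S) * u) (hrel : D - S = N * a * (D + S) * u ^ 2) :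
    S + (c * u - a * S * u ^ 2) / (1 + N * a * u ^ 2) =
      (1 / (2 * N)) * ((2 * N - 1) * S + D) := by
  subst huc
  have hNa : 0 < N * a := mul_pos (by linarith) ha
  have hq : 0 < 1 + N * a * u ^ 2 := by nlinarith [mul_nonneg hNa.le (sq_nonneg u)]
  have hN0 : N ≠ 0 := by linarith
  field_simp
  linear_combination (-1 : ℝ) * hrel

lemma weyl_isLUB (N a c S D : ℝ) (hN : 2 ≤ N) (ha : 0 < a) (hc : 0 ≤ c) (hD : 0 ≤ D)
    (hD2 : D ^ 2 * a = S ^ 2 * a + N * c ^ 2) :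
    IsLUB {y : ℝ | ∃ t ≥ (0 : ℝ), y = S + (c * t - a * S * t ^ 2) / (1 + N * a * t ^ 2)}
      ((1 / (2 * N)) * ((2 * N - 1) * S + D)) := by
  have hNa : 0 < N * a := mul_pos (by linarith) ha
  have hNc : 0 ≤ N * c ^ 2 := mul_nonneg (by linarith) (sq_nonneg c)
  have hDS0 : 0 ≤ D + S := by
    by_contra h
    push_neg at h
    have h1 : 0 < a * ((S - D) * (S + D)) :=
      mul_pos ha (mul_pos_of_neg_of_neg (by linarith) (by linarith))
    nlinarith
  have hSmem : S ∈ {y : ℝ | ∃ t ≥ (0 : ℝ),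
      y = S + (c * t - a * S * t ^ 2) / (1 + N * a * t ^ 2)} :=
    ⟨0, le_refl 0, by norm_num⟩
  constructor
  · rintro y ⟨t, ht, rfl⟩
    exact weyl_ub N a c S D t hN ha hc ht hD hD2
  · rintro b hb
    rcases eq_or_lt_of_le hDS0 with hDS | hDS
    · -- D + S = 0 : c = 0 and S = -D ≤ 0
      have hS2 : S ^ 2 = D ^ 2 := by nlinarith [sq_nonneg (S + D)]
      have hc2 : c ^ 2 = 0 := by nlinarith
      have hc0 : c = 0 := by nlinarith [sq_nonneg c]
      have hDm : D = -S := by linarith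
      rcases eq_or_lt_of_le (by linarith : S ≤ 0) with hS0 | hS0
      · have hEq : (1 / (2 * N)) * ((2 * N - 1) * S + D) = S := by
          rw [hDm]; field_simp; linear_combination (-2 : ℝ) * hS0
        rw [hEq]
        exact hb hSmem
      · by_contra hcon
        push_neg at hcon
        have hMval : (1 / (2 * N)) * ((2 * N - 1) * S + D) = (N - 1) * S / N := by
          rw [hDm]; field_simp; ring
        have hN0 : (0:ℝ) < N := by linarith
        have hδ : 0 < (N - 1) * S - N * b := by
          rw [hMval] at hcon
          have h := (lt_div_iff₀ hN0).mp hcon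
          linarith
        have hargt : 0 ≤ -S / (N * a * ((N - 1) * S - N * b)) := by
          apply div_nonneg (by linarith)
          positivity
        set t : ℝ := Real.sqrt (-S / (N * a * ((N - 1) * S - N * b))) with htdef
        have ht : 0 ≤ t := Real.sqrt_nonneg _
        have ht2 : t ^ 2 = -S / (N * a * ((N - 1) * S - N * b)) := Real.sq_sqrt hargt
        have hw : N * a * ((N - 1) * S - N * b) * t ^ 2 = -S := by
          rw [ht2]
          field_simp
        have hble := hb ⟨t, ht, rfl⟩
        have hq : 0 < 1 + N * a * t ^ 2 := by nlinarith [mul_nonneg hNa.le (sq_nonneg t)]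
        rw [hc0] at hble
        have h3 : (0 * t - a * S * t ^ 2) ≤ (b - S) * (1 + N * a * t ^ 2) := by
          rw [← div_le_iff₀ hq]
          linarith [hble]
        nlinarith [mul_le_mul_of_nonneg_left h3 hN0.le, hw, hδ]
    · -- D + S > 0 : supremum attained at u = c / (a * (D + S))
      have hPpos : 0 < a * (D + S) := mul_pos ha hDS
      have hP : a * (D + S) ≠ 0 := ne_of_gt hPpos
      set u : ℝ := c / (a * (D + S)) with hudef
      have hu : 0 ≤ u := div_nonneg hc hPpos.le
      have huc : c = a * (D + S) * u := by
        rw [hudef]; field_simp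
      have hrel : D - S = N * a * (D + S) * u ^ 2 := by
        rw [hudef]
        field_simp
        linear_combination hD2
      have := hb ⟨u, hu, rfl⟩
      rw [weyl_att N a c S D u hN ha huc hrel] at this
      exact this

theorem sup_weyl_estimate (n : ℕ) (hn : 2 ≤ n) (μ ν₀ S₀ : ℝ) (hμ : 0 < μ)
    (hν₀ : 0 ≤ ν₀) :
    sSup {y : ℝ | ∃ t ≥ (0 : ℝ),
        y = S₀ + (4 * ν₀ * t - ((n : ℝ) - 1) * μ ^ 2 * S₀ * t ^ 2) /
              (1 + (n : ℝ) * ((n : ℝ) - 1) * μ ^ 2 * t ^ 2)} =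
      (1 / (2 * (n : ℝ))) * ((2 * (n : ℝ) - 1) * S₀ +
        Real.sqrt (S₀ ^ 2 + ((n : ℝ) / ((n : ℝ) - 1)) * (4 * ν₀ / μ) ^ 2)) := by
  have hN : (2 : ℝ) ≤ (n : ℝ) := by exact_mod_cast hn
  have hN1 : 0 < (n : ℝ) - 1 := by linarith
  have ha : 0 < ((n : ℝ) - 1) * μ ^ 2 := by positivity
  have hc : 0 ≤ 4 * ν₀ := by linarith
  have harg : 0 ≤ S₀ ^ 2 + ((n : ℝ) / ((n : ℝ) - 1)) * (4 * ν₀ / μ) ^ 2 := by positivity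
  have hD : 0 ≤ Real.sqrt (S₀ ^ 2 + ((n : ℝ) / ((n : ℝ) - 1)) * (4 * ν₀ / μ) ^ 2) :=
    Real.sqrt_nonneg _
  have hD2 : (Real.sqrt (S₀ ^ 2 + ((n : ℝ) / ((n : ℝ) - 1)) * (4 * ν₀ / μ) ^ 2)) ^ 2 *
        (((n : ℝ) - 1) * μ ^ 2) =
      S₀ ^ 2 * (((n : ℝ) - 1) * μ ^ 2) + (n : ℝ) * (4 * ν₀) ^ 2 := by
    rw [Real.sq_sqrt harg]
    field_simp
  have hlub := weyl_isLUB ((n : ℝ)) (((n : ℝ) - 1) * μ ^ 2) (4 * ν₀) S₀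
    (Real.sqrt (S₀ ^ 2 + ((n : ℝ) / ((n : ℝ) - 1)) * (4 * ν₀ / μ) ^ 2)) hN ha hc hD hD2
  have hset : {y : ℝ | ∃ t ≥ (0 : ℝ),
        y = S₀ + (4 * ν₀ * t - ((n : ℝ) - 1) * μ ^ 2 * S₀ * t ^ 2) /
              (1 + (n : ℝ) * ((n : ℝ) - 1) * μ ^ 2 * t ^ 2)} =
      {y : ℝ | ∃ t ≥ (0 : ℝ),
        y = S₀ + (4 * ν₀ * t - ((n : ℝ) - 1) * μ ^ 2 * S₀ * t ^ 2) /
              (1 + (n : ℝ) * (((n : ℝ) - 1) * μ ^ 2) * t ^ 2)} := by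
    ext y
    constructor
    · rintro ⟨t, ht, rfl⟩
      exact ⟨t, ht, by ring_nf⟩
    · rintro ⟨t, ht, rfl⟩
      exact ⟨t, ht, by ring_nf⟩
  rw [hset]
  exact hlub.csSup_eq ⟨S₀, 0, le_refl 0, by norm_num⟩
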